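/- Let g₂ ⊂ so(7) be the span of the 14 matrices A_1 = E_{12}−E_{34}, A_2 = E_{12}−E_{56}, A_3 = E_{13}+E_{24}, A_4 = E_{13}−E_{67}, A_5 = E_{14}−E_{23}, A_6 = E_{14}−E_{57}, A_7 = E_{15}+E_{26}, A_8 = E_{15}+E_{47}, A_9 = E_{16}−E_{25}, A_{10} = E_{16}+E_{37}, A_{11} = E_{17}−E_{36}, A_{12} = E_{17}−E_{45}, A_{13} = E_{27}−E_{35}, A_{14} = E_{27}+E_{46}. Then the linear map P : ℝ⁷ → g₂ given by P(e_1)=A_6, P(e_2)=A_4+A_5, P(e_3)=A_1+A_7, P(e_4)=A_1, P(e_5)=A_4, P(e_6)=−A_5+A_6, P(e_7)=A_7 satisfies the weak-curvature identity ⟨P(u)v,w⟩ + ⟨P(v)w,u⟩ + ⟨P(w)u,v⟩ = 0 for all u,v,w ∈ ℝ⁷. -/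

import Mathlib

open Matrix

/-- Elementary skew-symmetric matrix `E_{ij}` (0-indexed: `E i j` corresponds to `E_{(i+1)(j+1)}`). -/
noncomputable def E (n : ℕ) (i j : Fin n) : Matrix (Fin n) (Fin n) ℝ :=
  Matrix.single i j 1 - Matrix.single j i 1

noncomputable def A1 : Matrix (Fin 7) (Fin 7) ℝ := E 7 0 1 - E 7 2 3
noncomputable def A2 : Matrix (Fin 7) (Fin 7) ℝ := E 7 0 1 - E 7 4 5
noncomputable def A3 : Matrix (Fin 7) (Fin 7) ℝ := E 7 0 2 + E 7 1 3
noncomputable def A4 : Matrix (Fin 7) (Fin 7) ℝ := E 7 0 2 - E 7 5 6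
noncomputable def A5 : Matrix (Fin 7) (Fin 7) ℝ := E 7 0 3 - E 7 1 2
noncomputable def A6 : Matrix (Fin 7) (Fin 7) ℝ := E 7 0 3 - E 7 4 6
noncomputable def A7 : Matrix (Fin 7) (Fin 7) ℝ := E 7 0 4 + E 7 1 5
noncomputable def A8 : Matrix (Fin 7) (Fin 7) ℝ := E 7 0 4 + E 7 3 6
noncomputable def A9 : Matrix (Fin 7) (Fin 7) ℝ := E 7 0 5 - E 7 1 4
noncomputable def A10 : Matrix (Fin 7) (Fin 7) ℝ := E 7 0 5 + E 7 2 6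
noncomputable def A11 : Matrix (Fin 7) (Fin 7) ℝ := E 7 0 6 - E 7 2 5
noncomputable def A12 : Matrix (Fin 7) (Fin 7) ℝ := E 7 0 6 - E 7 3 4
noncomputable def A13 : Matrix (Fin 7) (Fin 7) ℝ := E 7 1 6 - E 7 2 4
noncomputable def A14 : Matrix (Fin 7) (Fin 7) ℝ := E 7 1 6 + E 7 3 5

/-- The span of the 14 matrices: `g₂ ⊂ so(7)`. -/
noncomputable def g2span : Submodule ℝ (Matrix (Fin 7) (Fin 7) ℝ) :=
  Submodule.span ℝ {A1, A2, A3, A4, A5, A6, A7, A8, A9, A10, A11, A12, A13, A14}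

/-- Values of the map `P` on the standard basis of `ℝ⁷`. -/
noncomputable def PA : Fin 7 → Matrix (Fin 7) (Fin 7) ℝ :=
  ![A6, A4 + A5, A1 + A7, A1, A4, -A5 + A6, A7]

/-- The linear map `P : ℝ⁷ → g₂`. -/
noncomputable def Pmap (u : Fin 7 → ℝ) : Matrix (Fin 7) (Fin 7) ℝ := ∑ i, u i • PA i

@[simp] lemma cons_val_five {α : Type*} {m : ℕ} (x : α) (u : Fin (m+5) → α) :
    Matrix.vecCons x u 5 =
      Matrix.vecHead (Matrix.vecTail (Matrix.vecTail (Matrix.vecTail (Matrix.vecTail u)))) := rfl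

@[simp] lemma cons_val_six {α : Type*} {m : ℕ} (x : α) (u : Fin (m+6) → α) :
    Matrix.vecCons x u 6 =
      Matrix.vecHead (Matrix.vecTail (Matrix.vecTail (Matrix.vecTail
        (Matrix.vecTail (Matrix.vecTail u))))) := rfl

lemma PA0 : PA 0 = A6 := rfl
lemma PA1 : PA 1 = A4 + A5 := rfl
lemma PA2 : PA 2 = A1 + A7 := rfl
lemma PA3 : PA 3 = A1 := rfl
lemma PA4 : PA 4 = A4 := rfl
lemma PA5 : PA 5 = -A5 + A6 := rfl
lemma PA6 : PA 6 = A7 := rfl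

set_option maxHeartbeats 1600000 in
lemma Pmap_eq (u : Fin 7 → ℝ) : Pmap u =
    !![0, u 2 + u 3, u 1 + u 4, u 0 + u 1, u 2 + u 6, 0, 0;
       -(u 2 + u 3), 0, -(u 1) + u 5, 0, 0, u 2 + u 6, 0;
       -(u 1 + u 4), u 1 - u 5, 0, -(u 2 + u 3), 0, 0, 0;
       -(u 0 + u 1), 0, u 2 + u 3, 0, 0, 0, 0;
       -(u 2 + u 6), 0, 0, 0, 0, 0, -(u 0 + u 5);
       0, -(u 2 + u 6), 0, 0, 0, 0, -(u 1 + u 4);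
       0, 0, 0, 0, u 0 + u 5, u 1 + u 4, 0] := by
  ext i j
  fin_cases i <;> fin_cases j <;>
    simp [Pmap, PA0, PA1, PA2, PA3, PA4, PA5, PA6, A1, A4, A5, A6, A7, E, Fin.sum_univ_seven,
      Matrix.single, Matrix.sub_apply, Matrix.add_apply, Matrix.neg_apply,
      Matrix.vecHead, Matrix.vecTail, Function.comp] <;> ring

/-- `P` takes values in `g₂` and satisfies the weak-curvature identity. -/
theorem stmt13 :
    (∀ u : Fin 7 → ℝ, Pmap u ∈ g2span) ∧
    ∀ u v w : Fin 7 → ℝ,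
      ((Pmap u).mulVec v) ⬝ᵥ w + ((Pmap v).mulVec w) ⬝ᵥ u + ((Pmap w).mulVec u) ⬝ᵥ v = 0 := by
  constructor
  · intro u
    have h : ∀ X ∈ ({A1, A2, A3, A4, A5, A6, A7, A8, A9, A10, A11, A12, A13, A14} :
        Set (Matrix (Fin 7) (Fin 7) ℝ)), X ∈ g2span := fun X hX => Submodule.subset_span hX
    have h1 : A1 ∈ g2span := h _ (by simp)
    have h4 : A4 ∈ g2span := h _ (by simp)
    have h5 : A5 ∈ g2span := h _ (by simp)
    have h6 : A6 ∈ g2span := h _ (by simp)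
    have h7 : A7 ∈ g2span := h _ (by simp)
    have hm : ∀ i : Fin 7, PA i ∈ g2span := by
      intro i
      fin_cases i <;>
        rw [show PA _ = _ from (by rfl)] <;>
        first
          | assumption
          | exact add_mem h4 h5
          | exact add_mem h1 h7
          | exact add_mem (neg_mem h5) h6
    exact Submodule.sum_mem _ fun i _ => Submodule.smul_mem _ _ (hm i)
  · intro u v w
    rw [Pmap_eq u, Pmap_eq v, Pmap_eq w]
    simp [Matrix.mulVec, dotProduct, Fin.sum_univ_seven, Matrix.vecHead, Matrix.vecTail,
      Function.comp]
    ring
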